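/- The translation (−)^# of MS4 into MS4.t is full and faithful: for every formula φ of the language L□∀, MS4 ⊢ φ if and only if MS4.t ⊢ φ^#. -/

import Mathlib

/-- Formulas of the bimodal language `L□∀` with modalities `□` and `∀`. -/
inductive BForm : Type
  | var : Nat → BForm
  | bot : BForm
  | and : BForm → BForm → BForm
  | or  : BForm → BForm → BForm
  | imp : BForm → BForm → BForm
  | box : BForm → BForm
  | all : BForm → BForm

def BForm.neg (φ : BForm) : BForm := φ.imp BForm.bot
def BForm.iff (φ ψ : BForm) : BForm := (φ.imp ψ).and (ψ.imp φ)
/-- `◇φ := ¬□¬φ`. -/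
def BForm.dia (φ : BForm) : BForm := ((φ.neg).box).neg
/-- `∃φ := ¬∀¬φ`. -/
def BForm.ex (φ : BForm) : BForm := ((φ.neg).all).neg

/-- The monadic S4 logic `MS4`: classical propositional logic with S4-axioms for
`□`, S5-axioms for `∀`, and the left commutativity axiom `□∀p → ∀□p`, closed
under modus ponens, `□`-necessitation and `∀`-necessitation (axioms are given
as schemes, hence closure under uniform substitution is automatic). -/
inductive MS4 : BForm → Prop
  -- classical propositional axioms
  | a1 (φ ψ : BForm) : MS4 (φ.imp (ψ.imp φ))
  | a2 (φ ψ χ : BForm) : MS4 ((φ.imp (ψ.imp χ)).imp ((φ.imp ψ).imp (φ.imp χ)))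
  | a3 (φ ψ : BForm) : MS4 ((φ.and ψ).imp φ)
  | a4 (φ ψ : BForm) : MS4 ((φ.and ψ).imp ψ)
  | a5 (φ ψ : BForm) : MS4 (φ.imp (ψ.imp (φ.and ψ)))
  | a6 (φ ψ : BForm) : MS4 (φ.imp (φ.or ψ))
  | a7 (φ ψ : BForm) : MS4 (ψ.imp (φ.or ψ))
  | a8 (φ ψ χ : BForm) : MS4 ((φ.imp χ).imp ((ψ.imp χ).imp ((φ.or ψ).imp χ)))
  | a9 (φ : BForm) : MS4 (BForm.bot.imp φ)
  | dne (φ : BForm) : MS4 ((φ.neg.neg).imp φ)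
  -- S4-axioms for □
  | boxK (φ ψ : BForm) : MS4 (((φ.imp ψ).box).imp ((φ.box).imp ψ.box))
  | boxT (φ : BForm) : MS4 ((φ.box).imp φ)
  | box4 (φ : BForm) : MS4 ((φ.box).imp φ.box.box)
  -- S5-axioms for ∀
  | allK (φ ψ : BForm) : MS4 (((φ.imp ψ).all).imp ((φ.all).imp ψ.all))
  | allT (φ : BForm) : MS4 ((φ.all).imp φ)
  | all4 (φ : BForm) : MS4 ((φ.all).imp φ.all.all)
  | allB (φ : BForm) : MS4 (φ.imp (φ.ex.all))
  -- left commutativity axiom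
  | comm (φ : BForm) : MS4 ((φ.all.box).imp (φ.box.all))
  -- rules
  | mp (φ ψ : BForm) : MS4 (φ.imp ψ) → MS4 φ → MS4 ψ
  | necBox (φ : BForm) : MS4 φ → MS4 φ.box
  | necAll (φ : BForm) : MS4 φ → MS4 φ.all

/-- Formulas of the language `L_T∀` with modalities `□_F`, `□_P`, `∀`. -/
inductive AForm : Type
  | var : Nat → AForm
  | bot : AForm
  | and : AForm → AForm → AForm
  | or  : AForm → AForm → AForm
  | imp : AForm → AForm → AForm
  | boxF : AForm → AForm
  | boxP : AForm → AForm
  | fa   : AForm → AForm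

def AForm.neg (φ : AForm) : AForm := φ.imp AForm.bot
def AForm.iff (φ ψ : AForm) : AForm := (φ.imp ψ).and (ψ.imp φ)
/-- `◇_F φ := ¬□_F¬φ`. -/
def AForm.diaF (φ : AForm) : AForm := ((φ.neg).boxF).neg
/-- `◇_P φ := ¬□_P¬φ`. -/
def AForm.diaP (φ : AForm) : AForm := ((φ.neg).boxP).neg
/-- `∃φ := ¬∀¬φ`. -/
def AForm.exq (φ : AForm) : AForm := ((φ.neg).fa).neg

/-- The tense `MS4` logic `MS4.t`: classical logic with S4-axioms for `□_F` and
`□_P`, the tense axioms `p → □_P◇_F p` and `p → □_F◇_P p`, the S5-axioms for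
`∀`, and the left commutativity axiom `□_F∀p → ∀□_F p`, closed under modus
ponens and the three necessitation rules (axioms are given as schemes, hence
closure under uniform substitution is automatic). -/
inductive MS4t : AForm → Prop
  -- classical propositional axioms
  | a1 (φ ψ : AForm) : MS4t (φ.imp (ψ.imp φ))
  | a2 (φ ψ χ : AForm) : MS4t ((φ.imp (ψ.imp χ)).imp ((φ.imp ψ).imp (φ.imp χ)))
  | a3 (φ ψ : AForm) : MS4t ((φ.and ψ).imp φ)
  | a4 (φ ψ : AForm) : MS4t ((φ.and ψ).imp ψ)
  | a5 (φ ψ : AForm) : MS4t (φ.imp (ψ.imp (φ.and ψ)))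
  | a6 (φ ψ : AForm) : MS4t (φ.imp (φ.or ψ))
  | a7 (φ ψ : AForm) : MS4t (ψ.imp (φ.or ψ))
  | a8 (φ ψ χ : AForm) : MS4t ((φ.imp χ).imp ((ψ.imp χ).imp ((φ.or ψ).imp χ)))
  | a9 (φ : AForm) : MS4t (AForm.bot.imp φ)
  | dne (φ : AForm) : MS4t ((φ.neg.neg).imp φ)
  -- S4-axioms for □_F
  | bFK (φ ψ : AForm) : MS4t (((φ.imp ψ).boxF).imp ((φ.boxF).imp ψ.boxF))
  | bFT (φ : AForm) : MS4t ((φ.boxF).imp φ)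
  | bF4 (φ : AForm) : MS4t ((φ.boxF).imp φ.boxF.boxF)
  -- S4-axioms for □_P
  | bPK (φ ψ : AForm) : MS4t (((φ.imp ψ).boxP).imp ((φ.boxP).imp ψ.boxP))
  | bPT (φ : AForm) : MS4t ((φ.boxP).imp φ)
  | bP4 (φ : AForm) : MS4t ((φ.boxP).imp φ.boxP.boxP)
  -- tense axioms
  | tense1 (φ : AForm) : MS4t (φ.imp ((φ.diaF).boxP))
  | tense2 (φ : AForm) : MS4t (φ.imp ((φ.diaP).boxF))
  -- S5-axioms for ∀
  | faK (φ ψ : AForm) : MS4t (((φ.imp ψ).fa).imp ((φ.fa).imp ψ.fa))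
  | faT (φ : AForm) : MS4t ((φ.fa).imp φ)
  | fa4 (φ : AForm) : MS4t ((φ.fa).imp φ.fa.fa)
  | faB (φ : AForm) : MS4t (φ.imp (φ.exq.fa))
  -- left commutativity axiom
  | comm (φ : AForm) : MS4t ((φ.fa.boxF).imp (φ.boxF.fa))
  -- rules
  | mp (φ ψ : AForm) : MS4t (φ.imp ψ) → MS4t φ → MS4t ψ
  | necF (φ : AForm) : MS4t φ → MS4t φ.boxF
  | necP (φ : AForm) : MS4t φ → MS4t φ.boxP
  | necFa (φ : AForm) : MS4t φ → MS4t φ.fa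

/-- The translation `(−)^# : L□∀ → L_T∀` replacing every `□` by `□_F`. -/
def sharp : BForm → AForm
  | .var n => AForm.var n
  | .bot => AForm.bot
  | .and φ ψ => (sharp φ).and (sharp ψ)
  | .or φ ψ => (sharp φ).or (sharp ψ)
  | .imp φ ψ => (sharp φ).imp (sharp ψ)
  | .box φ => (sharp φ).boxF
  | .all φ => (sharp φ).fa
namespace MS4aux

/-! ### Derivability from a context -/

inductive Prov (Γ : Set BForm) : BForm → Prop
  | ax {φ} : MS4 φ → Prov Γ φ
  | hyp {φ} : φ ∈ Γ → Prov Γ φ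
  | mp {φ ψ} : Prov Γ (φ.imp ψ) → Prov Γ φ → Prov Γ ψ

theorem thm_id (φ : BForm) : MS4 (φ.imp φ) :=
  MS4.mp _ _ (MS4.mp _ _ (MS4.a2 φ (φ.imp φ) φ) (MS4.a1 φ (φ.imp φ))) (MS4.a1 φ φ)

theorem Prov.mono {Γ Δ : Set BForm} {φ} (h : Prov Γ φ) (hs : Γ ⊆ Δ) : Prov Δ φ := by
  induction h with
  | ax h => exact .ax h
  | hyp h => exact .hyp (hs h)
  | mp _ _ ih1 ih2 => exact .mp ih1 ih2

theorem deduction {Γ : Set BForm} {φ ψ} (h : Prov (insert φ Γ) ψ) : Prov Γ (φ.imp ψ) := by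
  induction h with
  | ax h => exact .mp (.ax (MS4.a1 _ _)) (.ax h)
  | @hyp χ h =>
    rcases Set.mem_insert_iff.1 h with h | h
    · subst h; exact .ax (thm_id _)
    · exact .mp (.ax (MS4.a1 _ _)) (.hyp h)
  | mp _ _ ih1 ih2 => exact .mp (.mp (.ax (MS4.a2 _ _ _)) ih1) ih2

theorem prov_empty {φ} (h : Prov ∅ φ) : MS4 φ := by
  induction h with
  | ax h => exact h
  | hyp h => exact absurd h (Set.notMem_empty _)
  | mp _ _ ih1 ih2 => exact MS4.mp _ _ ih1 ih2

theorem prov_list {Γ : Set BForm} {φ} (h : Prov Γ φ) :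
    ∃ L : List BForm, (∀ x ∈ L, x ∈ Γ) ∧ Prov {x | x ∈ L} φ := by
  induction h with
  | @ax χ h => exact ⟨[], by simp, .ax h⟩
  | @hyp χ h => exact ⟨[χ], by simpa, .hyp (by simp)⟩
  | mp _ _ ih1 ih2 =>
    obtain ⟨L1, h1, p1⟩ := ih1; obtain ⟨L2, h2, p2⟩ := ih2
    refine ⟨L1 ++ L2, ?_, ?_⟩
    · intro x hx; rcases List.mem_append.1 hx with hx | hx
      · exact h1 x hx
      · exact h2 x hx
    · exact .mp (p1.mono (by intro x hx; simp only [Set.mem_setOf_eq, List.mem_append] at *; exact Or.inl hx))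
        (p2.mono (by intro x hx; simp only [Set.mem_setOf_eq, List.mem_append] at *; exact Or.inr hx))

theorem foldr_exch (L : List BForm) (a φ : BForm) :
    MS4 ((L.foldr .imp (a.imp φ)).imp (a.imp (L.foldr .imp φ))) := by
  induction L with
  | nil => exact thm_id _
  | cons x L ih =>
    apply prov_empty
    apply deduction; apply deduction; apply deduction
    exact .mp (.mp (.ax ih)
        (.mp (.hyp (φ := x.imp (List.foldr BForm.imp (a.imp φ) L)) (by simp))
          (.hyp (φ := x) (by simp))))
      (.hyp (φ := a) (by simp))

theorem prov_foldr {L : List BForm} {φ} (h : Prov {x | x ∈ L} φ) :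
    MS4 (L.foldr .imp φ) := by
  induction L generalizing φ with
  | nil => exact prov_empty (h.mono (by simp))
  | cons a L ih =>
    have h1 : Prov (insert a {x | x ∈ L}) φ := h.mono (by
      intro x hx; simp only [Set.mem_setOf_eq, List.mem_cons] at hx
      rcases hx with h | h
      · exact Or.inl h
      · exact Or.inr h)
    exact MS4.mp _ _ (foldr_exch L a φ) (ih (deduction h1))

/-! ### Consistency and maximal consistent sets -/

def Consistent (Γ : Set BForm) : Prop := ¬ Prov Γ BForm.bot

def MCS (Γ : Set BForm) : Prop := Consistent Γ ∧ ∀ φ, φ ∈ Γ ∨ φ.neg ∈ Γ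

theorem prov_mem {Γ : Set BForm} (hΓ : MCS Γ) {φ} (h : Prov Γ φ) : φ ∈ Γ := by
  rcases hΓ.2 φ with hm | hm
  · exact hm
  · exact absurd (Prov.mp (.hyp hm) h) hΓ.1

theorem thm_mem {Γ : Set BForm} (hΓ : MCS Γ) {φ} (h : MS4 φ) : φ ∈ Γ :=
  prov_mem hΓ (.ax h)

theorem mp_mem {Γ : Set BForm} (hΓ : MCS Γ) {φ ψ} (h1 : φ.imp ψ ∈ Γ) (h2 : φ ∈ Γ) : ψ ∈ Γ :=
  prov_mem hΓ (.mp (.hyp h1) (.hyp h2))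

theorem bot_not_mem {Γ : Set BForm} (hΓ : MCS Γ) : BForm.bot ∉ Γ :=
  fun h => hΓ.1 (.hyp h)

theorem neg_mem_iff {Γ : Set BForm} (hΓ : MCS Γ) {φ} : φ.neg ∈ Γ ↔ φ ∉ Γ := by
  constructor
  · intro h1 h2; exact hΓ.1 (.mp (.hyp h1) (.hyp h2))
  · intro h; rcases hΓ.2 φ with hm | hm
    · exact absurd hm h
    · exact hm

theorem imp_mem_iff {Γ : Set BForm} (hΓ : MCS Γ) {φ ψ} : φ.imp ψ ∈ Γ ↔ (φ ∈ Γ → ψ ∈ Γ) := by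
  constructor
  · intro h hφ; exact mp_mem hΓ h hφ
  · intro h
    by_cases hφ : φ ∈ Γ
    · exact prov_mem hΓ (.mp (.ax (MS4.a1 _ _)) (.hyp (h hφ)))
    · have hn : φ.neg ∈ Γ := (neg_mem_iff hΓ).2 hφ
      refine prov_mem hΓ (deduction ?_)
      exact .mp (.ax (MS4.a9 ψ)) (.mp (.hyp (Or.inr hn)) (.hyp (Or.inl rfl)))

theorem and_mem_iff {Γ : Set BForm} (hΓ : MCS Γ) {φ ψ} : φ.and ψ ∈ Γ ↔ (φ ∈ Γ ∧ ψ ∈ Γ) := by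
  constructor
  · intro h; exact ⟨mp_mem hΓ (thm_mem hΓ (MS4.a3 φ ψ)) h, mp_mem hΓ (thm_mem hΓ (MS4.a4 φ ψ)) h⟩
  · intro ⟨h1, h2⟩
    exact prov_mem hΓ (.mp (.mp (.ax (MS4.a5 φ ψ)) (.hyp h1)) (.hyp h2))

theorem or_mem_iff {Γ : Set BForm} (hΓ : MCS Γ) {φ ψ} : φ.or ψ ∈ Γ ↔ (φ ∈ Γ ∨ ψ ∈ Γ) := by
  constructor
  · intro h; by_contra hn
    push_neg at hn
    have h1 : φ.neg ∈ Γ := (neg_mem_iff hΓ).2 hn.1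
    have h2 : ψ.neg ∈ Γ := (neg_mem_iff hΓ).2 hn.2
    exact hΓ.1 (.mp (.mp (.mp (.ax (MS4.a8 φ ψ BForm.bot)) (.hyp h1)) (.hyp h2)) (.hyp h))
  · intro h; rcases h with h | h
    · exact mp_mem hΓ (thm_mem hΓ (MS4.a6 φ ψ)) h
    · exact mp_mem hΓ (thm_mem hΓ (MS4.a7 φ ψ)) h

theorem lindenbaum {S : Set BForm} (hS : Consistent S) : ∃ Γ, S ⊆ Γ ∧ MCS Γ := by
  have hzorn : ∀ c ⊆ {T : Set BForm | Consistent T}, IsChain (· ⊆ ·) c → c.Nonempty →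
      ∃ ub ∈ {T : Set BForm | Consistent T}, ∀ s ∈ c, s ⊆ ub := by
    intro c hc hchain hne
    refine ⟨⋃₀ c, ?_, fun s hs => Set.subset_sUnion_of_mem hs⟩
    intro hP
    obtain ⟨L, hL, hLp⟩ := prov_list hP
    -- find a single member of the chain containing all of L
    have : ∃ T ∈ c, ∀ x ∈ L, x ∈ T := by
      clear hLp
      induction L with
      | nil => exact ⟨hne.choose, hne.choose_spec, by simp⟩
      | cons a L ih =>
        obtain ⟨T, hT, hTL⟩ := ih (fun x hx => hL x (List.mem_cons_of_mem _ hx))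
        obtain ⟨U, hU, haU⟩ := hL a List.mem_cons_self
        rcases hchain.total hT hU with h | h
        · exact ⟨U, hU, fun x hx => by
            rcases List.mem_cons.1 hx with rfl | hx
            · exact haU
            · exact h (hTL x hx)⟩
        · exact ⟨T, hT, fun x hx => by
            rcases List.mem_cons.1 hx with rfl | hx
            · exact h haU
            · exact hTL x hx⟩
    obtain ⟨T, hTc, hT⟩ := this
    exact hc hTc (hLp.mono (fun x hx => hT x hx))
  obtain ⟨Γ, hsub, hmax⟩ := zorn_subset_nonempty {T | Consistent T} hzorn S hS
  refine ⟨Γ, hsub, hmax.1, ?_⟩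
  intro φ
  by_contra hn
  push_neg at hn
  have hi : ∀ χ : BForm, χ ∉ Γ → Prov Γ χ.neg := by
    intro χ hχ
    have hnc : ¬ Consistent (insert χ Γ) := fun hc =>
      hχ (hmax.2 hc (Set.subset_insert _ _) (Set.mem_insert _ _))
    exact deduction (not_not.1 hnc)
  exact hmax.1 (Prov.mp (hi φ.neg hn.2) (hi φ hn.1))

end MS4aux
namespace MS4aux

/-! ### Basic derived theorems of MS4 -/

theorem imp_trans {a b c : BForm} (h1 : MS4 (a.imp b)) (h2 : MS4 (b.imp c)) :
    MS4 (a.imp c) := by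
  apply prov_empty; apply deduction
  exact .mp (.ax h2) (.mp (.ax h1) (.hyp (φ := a) (by simp)))

theorem all_mono {a b : BForm} (h : MS4 (a.imp b)) : MS4 (a.all.imp b.all) :=
  MS4.mp _ _ (MS4.allK a b) (MS4.necAll _ h)

theorem box_mono {a b : BForm} (h : MS4 (a.imp b)) : MS4 (a.box.imp b.box) :=
  MS4.mp _ _ (MS4.boxK a b) (MS4.necBox _ h)

theorem all_mono2 {a b c : BForm} (h : MS4 (a.imp (b.imp c))) :
    MS4 (a.all.imp (b.all.imp c.all)) :=
  imp_trans (MS4.mp _ _ (MS4.allK a (b.imp c)) (MS4.necAll _ h)) (MS4.allK b c)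

theorem contrapose {a b : BForm} (h : MS4 (a.imp b)) : MS4 (b.neg.imp a.neg) := by
  apply prov_empty; apply deduction; apply deduction
  exact .mp (.hyp (φ := b.neg) (by simp)) (.mp (.ax h) (.hyp (φ := a) (by simp)))

theorem dneg_intro (a : BForm) : MS4 (a.imp a.neg.neg) := by
  apply prov_empty; apply deduction; apply deduction
  exact .mp (.hyp (φ := a.neg) (by simp)) (.hyp (φ := a) (by simp))

theorem tert (a : BForm) : MS4 (a.or a.neg) := by
  refine MS4.mp _ _ (MS4.dne (a.or a.neg)) (prov_empty (deduction ?_))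
  set Γ : Set BForm := insert (a.or a.neg).neg ∅ with hΓ
  have hN : Prov Γ ((a.or a.neg).neg) := .hyp (by simp [hΓ])
  have hna : Prov Γ a.neg := by
    apply deduction
    exact .mp (hN.mono (Set.subset_insert _ _))
      (.mp (.ax (MS4.a6 a a.neg)) (.hyp (φ := a) (by simp)))
  exact .mp hN (.mp (.ax (MS4.a7 a a.neg)) hna)

theorem imp_to_or (a b : BForm) : MS4 ((a.imp b).imp (a.neg.or b)) := by
  apply prov_empty; apply deduction
  set Γ : Set BForm := insert (a.imp b) ∅ with hΓ
  refine .mp (.mp (.mp (.ax (MS4.a8 a a.neg (a.neg.or b))) ?_) (.ax (MS4.a6 a.neg b))) (.ax (tert a))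
  apply deduction
  exact .mp (.ax (MS4.a7 a.neg b))
    (.mp (.hyp (φ := a.imp b) (by simp [hΓ])) (.hyp (φ := a) (by simp)))

theorem imp_imp_mono {a b c : BForm} (h : MS4 (b.imp c)) : MS4 ((a.imp b).imp (a.imp c)) :=
  MS4.mp _ _ (MS4.a2 a b c) (MS4.mp _ _ (MS4.a1 (b.imp c) a) h)

theorem foldr_mono (L : List BForm) {b c : BForm} (h : MS4 (b.imp c)) :
    MS4 ((L.foldr .imp b).imp (L.foldr .imp c)) := by
  induction L with
  | nil => exact h
  | cons a L ih => exact imp_imp_mono ih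

/-! ### Stability under ∀ -/

def Stb (a : BForm) : Prop := MS4 (a.imp a.all)

def Stb2 (a : BForm) : Prop := Stb a ∧ Stb a.neg

theorem stb_all (ψ : BForm) : Stb ψ.all := MS4.all4 ψ

theorem stb_nall (ψ : BForm) : Stb (ψ.all.neg) := by
  have h1 : MS4 (ψ.all.imp ((ψ.all.neg.neg).all)) :=
    imp_trans (MS4.all4 ψ) (all_mono (dneg_intro ψ.all))
  have h2 : MS4 ((ψ.all.neg).ex.imp (ψ.all.neg)) := contrapose h1
  exact imp_trans (MS4.allB (ψ.all.neg)) (all_mono h2)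

theorem stb_dnall (ψ : BForm) : Stb (ψ.all.neg.neg) :=
  imp_trans (MS4.dne ψ.all) (imp_trans (MS4.all4 ψ) (all_mono (dneg_intro ψ.all)))

theorem stb2_all (ψ : BForm) : Stb2 ψ.all := ⟨stb_all ψ, stb_nall ψ⟩

theorem stb2_nall (ψ : BForm) : Stb2 (ψ.all.neg) := ⟨stb_nall ψ, stb_dnall ψ⟩

theorem stb2_bot : Stb2 BForm.bot := by
  constructor
  · exact MS4.a9 _
  · exact MS4.mp _ _ (MS4.a1 _ _) (MS4.necAll _ (thm_id BForm.bot))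

theorem efq_imp (a b : BForm) : MS4 (a.neg.imp (a.imp b)) := by
  apply prov_empty; apply deduction; apply deduction
  exact .mp (.ax (MS4.a9 b))
    (.mp (.hyp (φ := a.neg) (by simp)) (.hyp (φ := a) (by simp)))

theorem stb2_imp {a b : BForm} (ha : Stb2 a) (hb : Stb2 b) : Stb2 (a.imp b) := by
  constructor
  · -- (a→b) → ∀(a→b)
    have h1 : MS4 (a.neg.imp ((a.imp b).all)) := imp_trans ha.2 (all_mono (efq_imp a b))
    have h2 : MS4 (b.imp ((a.imp b).all)) := imp_trans hb.1 (all_mono (MS4.a1 b a))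
    have h3 : MS4 ((a.neg.or b).imp ((a.imp b).all)) :=
      MS4.mp _ _ (MS4.mp _ _ (MS4.a8 a.neg b ((a.imp b).all)) h1) h2
    exact imp_trans (imp_to_or a b) h3
  · -- ¬(a→b) → ∀¬(a→b)
    have nab_a : MS4 ((a.imp b).neg.imp a) := by
      refine imp_trans ?_ (MS4.dne a)
      apply prov_empty; apply deduction; apply deduction
      refine .mp (.hyp (φ := (a.imp b).neg) (by simp)) ?_
      apply deduction
      exact .mp (.ax (MS4.a9 b))
        (.mp (.hyp (φ := a.neg) (by simp)) (.hyp (φ := a) (by simp)))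
    have nab_nb : MS4 ((a.imp b).neg.imp b.neg) := contrapose (MS4.a1 b a)
    have comb : MS4 (a.imp (b.neg.imp ((a.imp b).neg))) := by
      apply prov_empty; apply deduction; apply deduction; apply deduction
      exact .mp (.hyp (φ := b.neg) (by simp))
        (.mp (.hyp (φ := a.imp b) (by simp)) (.hyp (φ := a) (by simp)))
    have all2 := all_mono2 comb
    apply prov_empty; apply deduction
    set Γ : Set BForm := insert (a.imp b).neg ∅ with hΓ
    have hh : Prov Γ ((a.imp b).neg) := .hyp (by simp [hΓ])
    have hga : Prov Γ a.all := .mp (.ax ha.1) (.mp (.ax nab_a) hh)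
    have hgb : Prov Γ b.neg.all := .mp (.ax hb.2) (.mp (.ax nab_nb) hh)
    exact .mp (.mp (.ax all2) hga) hgb

theorem stb2_foldr (L : List BForm) (h : ∀ x ∈ L, Stb2 x) : Stb2 (L.foldr .imp BForm.bot) := by
  induction L with
  | nil => exact stb2_bot
  | cons a L ih =>
    exact stb2_imp (h a List.mem_cons_self) (ih fun x hx => h x (List.mem_cons_of_mem _ hx))

end MS4aux
namespace MS4aux

/-! ### Canonical relations and existence lemmas -/

def Rel (Γ Δ : Set BForm) : Prop := ∀ φ : BForm, φ.box ∈ Γ → φ ∈ Δ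

def Esim (Γ Δ : Set BForm) : Prop := ∀ φ : BForm, φ.all ∈ Γ ↔ φ.all ∈ Δ

theorem rel_refl {Γ} (hΓ : MCS Γ) : Rel Γ Γ :=
  fun φ h => mp_mem hΓ (thm_mem hΓ (MS4.boxT φ)) h

theorem rel_trans {Γ Δ Θ} (hΓ : MCS Γ) (h1 : Rel Γ Δ) (h2 : Rel Δ Θ) : Rel Γ Θ :=
  fun φ h => h2 φ (h1 φ.box (mp_mem hΓ (thm_mem hΓ (MS4.box4 φ)) h))

theorem box_foldr_mem {Γ} (hΓ : MCS Γ) (L : List BForm) (χ : BForm)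
    (h : (L.foldr .imp χ).box ∈ Γ) (hL : ∀ x ∈ L, x.box ∈ Γ) : χ.box ∈ Γ := by
  induction L with
  | nil => exact h
  | cons a L ih =>
    have hK := thm_mem hΓ (MS4.boxK a (L.foldr .imp χ))
    exact ih (mp_mem hΓ (mp_mem hΓ hK h) (hL a List.mem_cons_self))
      (fun x hx => hL x (List.mem_cons_of_mem _ hx))

theorem all_foldr_mem {Γ} (hΓ : MCS Γ) (L : List BForm) (χ : BForm)
    (h : (L.foldr .imp χ).all ∈ Γ) (hL : ∀ x ∈ L, x ∈ Γ ∧ Stb x) : χ.all ∈ Γ := by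
  induction L with
  | nil => exact h
  | cons a L ih =>
    have hK := thm_mem hΓ (MS4.allK a (L.foldr .imp χ))
    have hax : a.all ∈ Γ := mp_mem hΓ (thm_mem hΓ (hL a List.mem_cons_self).2)
      (hL a List.mem_cons_self).1
    exact ih (mp_mem hΓ (mp_mem hΓ hK h) hax) (fun x hx => hL x (List.mem_cons_of_mem _ hx))

theorem exists_box {Γ : Set BForm} {φ} (hΓ : MCS Γ) (h : φ.box ∉ Γ) :
    ∃ Δ, MCS Δ ∧ Rel Γ Δ ∧ φ ∉ Δ := by
  set T : Set BForm := {ψ | ψ.box ∈ Γ} with hT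
  have hcons : Consistent (insert φ.neg T) := by
    intro hP
    have h1 : Prov T φ := .mp (.ax (MS4.dne φ)) (deduction hP)
    obtain ⟨L, hL, hLp⟩ := prov_list h1
    have hf : MS4 (L.foldr .imp φ) := prov_foldr hLp
    have hb : (L.foldr .imp φ).box ∈ Γ := thm_mem hΓ (MS4.necBox _ hf)
    exact h (box_foldr_mem hΓ L φ hb (fun x hx => hL x hx))
  obtain ⟨Δ, hsub, hΔ⟩ := lindenbaum hcons
  refine ⟨Δ, hΔ, fun ψ hψ => hsub (Set.mem_insert_of_mem _ hψ), fun hφ => ?_⟩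
  exact hΔ.1 (.mp (.hyp (hsub (Set.mem_insert _ _))) (.hyp hφ))

/-- The `∀`-profile of an MCS. -/
def Aprof (Γ : Set BForm) : Set BForm :=
  {χ | ∃ ψ : BForm, (χ = ψ.all ∧ ψ.all ∈ Γ) ∨ (χ = ψ.all.neg ∧ ψ.all ∉ Γ)}

theorem aprof_mem {Γ} (hΓ : MCS Γ) {x} (hx : x ∈ Aprof Γ) : x ∈ Γ := by
  obtain ⟨ψ, h | h⟩ := hx
  · rw [h.1]; exact h.2
  · rw [h.1]; exact (neg_mem_iff hΓ).2 h.2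

theorem aprof_stb2 {Γ} {x} (hx : x ∈ Aprof Γ) : Stb2 x := by
  obtain ⟨ψ, h | h⟩ := hx
  · rw [h.1]; exact stb2_all ψ
  · rw [h.1]; exact stb2_nall ψ

theorem exists_all {Γ : Set BForm} {φ} (hΓ : MCS Γ) (h : φ.all ∉ Γ) :
    ∃ Δ, MCS Δ ∧ Esim Γ Δ ∧ φ ∉ Δ := by
  have hcons : Consistent (insert φ.neg (Aprof Γ)) := by
    intro hP
    have h1 : Prov (Aprof Γ) φ := .mp (.ax (MS4.dne φ)) (deduction hP)
    obtain ⟨L, hL, hLp⟩ := prov_list h1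
    have hf : MS4 (L.foldr .imp φ) := prov_foldr hLp
    have hb : (L.foldr .imp φ).all ∈ Γ := thm_mem hΓ (MS4.necAll _ hf)
    exact h (all_foldr_mem hΓ L φ hb
      (fun x hx => ⟨aprof_mem hΓ (hL x hx), (aprof_stb2 (hL x hx)).1⟩))
  obtain ⟨Δ, hsub, hΔ⟩ := lindenbaum hcons
  refine ⟨Δ, hΔ, ?_, fun hφ => hΔ.1 (.mp (.hyp (hsub (Set.mem_insert _ _))) (.hyp hφ))⟩
  intro ψ
  constructor
  · intro hψ
    exact hsub (Set.mem_insert_of_mem _ ⟨ψ, Or.inl ⟨rfl, hψ⟩⟩)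
  · intro hψ
    by_contra hn
    have : ψ.all.neg ∈ Δ := hsub (Set.mem_insert_of_mem _ ⟨ψ, Or.inr ⟨rfl, hn⟩⟩)
    exact hΔ.1 (.mp (.hyp this) (.hyp hψ))

theorem foldr_bot_mem {Γ} (hΓ : MCS Γ) (L : List BForm)
    (h : L.foldr .imp BForm.bot ∈ Γ) (hL : ∀ x ∈ L, x ∈ Γ) : False := by
  induction L with
  | nil => exact bot_not_mem hΓ h
  | cons a L ih =>
    exact ih (mp_mem hΓ h (hL a List.mem_cons_self))
      (fun x hx => hL x (List.mem_cons_of_mem _ hx))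

theorem exists_comm {Γ Δ Θ : Set BForm} (hΓ : MCS Γ) (hΔ : MCS Δ) (hΘ : MCS Θ)
    (hE : Esim Γ Δ) (hR : Rel Δ Θ) :
    ∃ Pi, MCS Pi ∧ Rel Γ Pi ∧ Esim Pi Θ := by
  classical
  set T : Set BForm := {ψ | ψ.box ∈ Γ} with hT
  set A : Set BForm := Aprof Θ with hA
  have hcons : Consistent (T ∪ A) := by
    intro hP
    obtain ⟨L, hL, hLp⟩ := prov_list hP
    set L1 : List BForm := L.filter (fun x => x ∈ T) with hL1
    set L2 : List BForm := L.filter (fun x => x ∉ T) with hL2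
    have hsub : {x : BForm | x ∈ L} ⊆ {x | x ∈ L1 ++ L2} := by
      intro x hx
      simp only [Set.mem_setOf_eq, List.mem_append, hL1, hL2, List.mem_filter,
        decide_eq_true_eq] at *
      by_cases hxT : x ∈ T
      · exact Or.inl ⟨hx, hxT⟩
      · exact Or.inr ⟨hx, hxT⟩
    have hf : MS4 ((L1 ++ L2).foldr .imp .bot) := prov_foldr (hLp.mono hsub)
    rw [List.foldr_append] at hf
    set χ : BForm := L2.foldr .imp .bot with hχ
    have hmemL1 : ∀ x ∈ L1, x.box ∈ Γ := by
      intro x hx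
      rw [hL1] at hx
      exact (List.mem_filter.1 hx).2 |> fun h => by
        simpa [hT] using of_decide_eq_true h
    have hmemL2 : ∀ x ∈ L2, x ∈ A := by
      intro x hx
      rw [hL2] at hx
      have h1 := (List.mem_filter.1 hx).1
      have h2 : x ∉ T := by simpa using of_decide_eq_true (List.mem_filter.1 hx).2
      rcases hL x h1 with h | h
      · exact absurd h h2
      · exact h
    have hstb : Stb2 χ := stb2_foldr L2 (fun x hx => aprof_stb2 (hmemL2 x hx))
    have hf2 : MS4 (L1.foldr .imp χ.all) := MS4.mp _ _ (foldr_mono L1 hstb.1) hf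
    have hb : χ.all.box ∈ Γ := box_foldr_mem hΓ L1 χ.all (thm_mem hΓ (MS4.necBox _ hf2)) hmemL1
    have hc : χ.box.all ∈ Γ := mp_mem hΓ (thm_mem hΓ (MS4.comm χ)) hb
    have hcΔ : χ.box.all ∈ Δ := (hE χ.box).1 hc
    have hboxΔ : χ.box ∈ Δ := mp_mem hΔ (thm_mem hΔ (MS4.allT χ.box)) hcΔ
    have hχΘ : χ ∈ Θ := hR χ hboxΔ
    exact foldr_bot_mem hΘ L2 hχΘ (fun x hx => aprof_mem hΘ (hmemL2 x hx))
  obtain ⟨Pi, hsub, hPi⟩ := lindenbaum hcons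
  refine ⟨Pi, hPi, fun ψ hψ => hsub (Or.inl hψ), ?_⟩
  intro ψ
  constructor
  · intro hψ
    by_contra hn
    have : ψ.all.neg ∈ Pi := hsub (Or.inr ⟨ψ, Or.inr ⟨rfl, hn⟩⟩)
    exact hPi.1 (.mp (.hyp this) (.hyp hψ))
  · intro hψ
    exact hsub (Or.inr ⟨ψ, Or.inl ⟨rfl, hψ⟩⟩)

end MS4aux
namespace MS4aux

/-! ### The canonical model and semantics for `AForm` -/

def W : Type := {Γ : Set BForm // MCS Γ}

def satA : W → AForm → Prop
  | Γ, .var n => BForm.var n ∈ Γ.1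
  | _, .bot => False
  | Γ, .and φ ψ => satA Γ φ ∧ satA Γ ψ
  | Γ, .or φ ψ => satA Γ φ ∨ satA Γ ψ
  | Γ, .imp φ ψ => satA Γ φ → satA Γ ψ
  | Γ, .boxF φ => ∀ Δ : W, Rel Γ.1 Δ.1 → satA Δ φ
  | Γ, .boxP φ => ∀ Δ : W, Rel Δ.1 Γ.1 → satA Δ φ
  | Γ, .fa φ => ∀ Δ : W, Esim Γ.1 Δ.1 → satA Δ φ

theorem sound {ψ : AForm} (h : MS4t ψ) : ∀ Γ : W, satA Γ ψ := by
  induction h with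
  | a1 φ ψ => intro Γ; simp only [satA]; tauto
  | a2 φ ψ χ => intro Γ; simp only [satA]; tauto
  | a3 φ ψ => intro Γ; simp only [satA]; tauto
  | a4 φ ψ => intro Γ; simp only [satA]; tauto
  | a5 φ ψ => intro Γ; simp only [satA]; tauto
  | a6 φ ψ => intro Γ; simp only [satA]; tauto
  | a7 φ ψ => intro Γ; simp only [satA]; tauto
  | a8 φ ψ χ => intro Γ; simp only [satA]; tauto
  | a9 φ => intro Γ; simp only [satA]; tauto
  | dne φ => intro Γ; simp only [AForm.neg, satA]; tauto
  | bFK φ ψ => intro Γ h1 h2 Δ hR; exact h1 Δ hR (h2 Δ hR)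
  | bFT φ => intro Γ h1; exact h1 Γ (rel_refl Γ.2)
  | bF4 φ => intro Γ h1 Δ hR Θ hR2; exact h1 Θ (rel_trans Γ.2 hR hR2)
  | bPK φ ψ => intro Γ h1 h2 Δ hR; exact h1 Δ hR (h2 Δ hR)
  | bPT φ => intro Γ h1; exact h1 Γ (rel_refl Γ.2)
  | bP4 φ => intro Γ h1 Δ hR Θ hR2; exact h1 Θ (rel_trans Θ.2 hR2 hR)
  | tense1 φ =>
    intro Γ h1 Δ hR
    simp only [AForm.diaF, AForm.neg, satA]
    intro hall
    exact hall Γ hR h1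
  | tense2 φ =>
    intro Γ h1 Δ hR
    simp only [AForm.diaP, AForm.neg, satA]
    intro hall
    exact hall Γ hR h1
  | faK φ ψ => intro Γ h1 h2 Δ hE; exact h1 Δ hE (h2 Δ hE)
  | faT φ => intro Γ h1; exact h1 Γ (fun _ => Iff.rfl)
  | fa4 φ => intro Γ h1 Δ hE Θ hE2; exact h1 Θ (fun χ => (hE χ).trans (hE2 χ))
  | faB φ =>
    intro Γ h1 Δ hE
    simp only [AForm.exq, AForm.neg, satA]
    intro hall
    exact hall Γ (fun χ => (hE χ).symm) h1
  | comm φ =>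
    intro Γ h1 Δ hE Θ hR
    obtain ⟨Pi, hPi, hRP, hEP⟩ := exists_comm Γ.2 Δ.2 Θ.2 hE hR
    exact h1 ⟨Pi, hPi⟩ hRP Θ hEP
  | mp φ ψ h1 h2 ih1 ih2 => intro Γ; exact ih1 Γ (ih2 Γ)
  | necF φ h ih => intro Γ Δ _; exact ih Δ
  | necP φ h ih => intro Γ Δ _; exact ih Δ
  | necFa φ h ih => intro Γ Δ _; exact ih Δ

/-! ### Truth lemma -/

theorem truth (φ : BForm) : ∀ Γ : W, satA Γ (sharp φ) ↔ φ ∈ Γ.1 := by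
  induction φ with
  | var n => intro Γ; exact Iff.rfl
  | bot => intro Γ; simp only [sharp, satA]; exact ⟨False.elim, bot_not_mem Γ.2⟩
  | and φ ψ ihφ ihψ =>
    intro Γ; simp only [sharp, satA, ihφ, ihψ, and_mem_iff Γ.2]
  | or φ ψ ihφ ihψ =>
    intro Γ; simp only [sharp, satA, ihφ, ihψ, or_mem_iff Γ.2]
  | imp φ ψ ihφ ihψ =>
    intro Γ; simp only [sharp, satA, ihφ, ihψ, imp_mem_iff Γ.2]
  | box φ ih =>
    intro Γ
    constructor
    · intro h
      by_contra hn
      obtain ⟨Δ, hΔ, hR, hφ⟩ := exists_box Γ.2 hn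
      exact hφ ((ih ⟨Δ, hΔ⟩).1 (h ⟨Δ, hΔ⟩ hR))
    · intro h Δ hR
      exact (ih Δ).2 (hR φ h)
  | all φ ih =>
    intro Γ
    constructor
    · intro h
      by_contra hn
      obtain ⟨Δ, hΔ, hE, hφ⟩ := exists_all Γ.2 hn
      exact hφ ((ih ⟨Δ, hΔ⟩).1 (h ⟨Δ, hΔ⟩ hE))
    · intro h Δ hE
      have h1 : φ.all ∈ Δ.1 := (hE φ).1 h
      exact (ih Δ).2 (mp_mem Δ.2 (thm_mem Δ.2 (MS4.allT φ)) h1)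

end MS4aux
/-- The translation `(−)^#` of `MS4` into `MS4.t` is full and
faithful: `MS4 ⊢ φ` iff `MS4.t ⊢ φ^#`. -/
theorem sharp_full_and_faithful (φ : BForm) : MS4 φ ↔ MS4t (sharp φ) := by
  constructor
  · intro h
    induction h with
    | a1 φ ψ => exact MS4t.a1 _ _
    | a2 φ ψ χ => exact MS4t.a2 _ _ _
    | a3 φ ψ => exact MS4t.a3 _ _
    | a4 φ ψ => exact MS4t.a4 _ _
    | a5 φ ψ => exact MS4t.a5 _ _
    | a6 φ ψ => exact MS4t.a6 _ _
    | a7 φ ψ => exact MS4t.a7 _ _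
    | a8 φ ψ χ => exact MS4t.a8 _ _ _
    | a9 φ => exact MS4t.a9 _
    | dne φ => exact MS4t.dne _
    | boxK φ ψ => exact MS4t.bFK _ _
    | boxT φ => exact MS4t.bFT _
    | box4 φ => exact MS4t.bF4 _
    | allK φ ψ => exact MS4t.faK _ _
    | allT φ => exact MS4t.faT _
    | all4 φ => exact MS4t.fa4 _
    | allB φ => exact MS4t.faB _
    | comm φ => exact MS4t.comm _
    | mp φ ψ h1 h2 ih1 ih2 => exact MS4t.mp _ _ ih1 ih2
    | necBox φ h ih => exact MS4t.necF _ ih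
    | necAll φ h ih => exact MS4t.necFa _ ih
  · intro h
    by_contra hn
    have hc : MS4aux.Consistent {φ.neg} := by
      intro hP
      have h1 : MS4aux.Prov (insert φ.neg ∅) BForm.bot :=
        hP.mono (by intro x hx; simp_all)
      exact hn (MS4.mp _ _ (MS4.dne φ) (MS4aux.prov_empty (MS4aux.deduction h1)))
    obtain ⟨Γ, hsub, hΓ⟩ := MS4aux.lindenbaum hc
    have hsat := MS4aux.sound h (⟨Γ, hΓ⟩ : MS4aux.W)
    have hmem : φ ∈ Γ := (MS4aux.truth φ ⟨Γ, hΓ⟩).1 hsat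
    have hneg : φ.neg ∈ Γ := hsub rfl
    exact hΓ.1 (.mp (.hyp hneg) (.hyp hmem))
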